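/- arXiv:1903.01642 — 2 statements merged into one kernel-verified Lean document; each statement's English description precedes it below -/
import Mathlib

section
/- Under the KL-distance formula $D(c, \tilde{c}) = \frac{ab - |c|^2}{ab - |\tilde{c}|^2} - \ln\frac{ab - |c|^2}{ab - |\tilde{c}|^2} - 1 + \frac{|c - \tilde{c}|^2}{ab - |\tilde{c}|^2}$, for fixed $a, b$ with $ab > \max_{c \in \mathcal{Q}} |c|^2$, the minimum of $D(c,\tilde{c})$ over distinct points $c \neq \tilde{c}$ of the square QAM constellation $\mathcal{Q}$ equals $\frac{d^2}{ab - d^2/2}$, attained at nearest-neighbor points with equal modulus, e.g., $c = (1+j)d/2$ and $\tilde{c} = (1-j)d/2$. -/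
/-- The `4^K`-ary square QAM constellation with minimum distance `d`. -/
def squareQAM (K : ℕ) (d : ℝ) : Set ℂ :=
  {z | ∃ m n : ℕ, 1 ≤ m ∧ m ≤ 2 ^ (K - 1) ∧ 1 ≤ n ∧ n ≤ 2 ^ (K - 1) ∧
    ∃ e₁ e₂ : ℝ, (e₁ = 1 ∨ e₁ = -1) ∧ (e₂ = 1 ∨ e₂ = -1) ∧
      z = ((e₁ * ((m : ℝ) - 1 / 2)) + (e₂ * ((n : ℝ) - 1 / 2)) * Complex.I) * d}

/-- The KL distance `D(c,c̃)` for covariance parameters `a, b`. -/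
noncomputable def klDist (a b : ℝ) (c ctil : ℂ) : ℝ :=
  (a * b - ‖c‖ ^ 2) / (a * b - ‖ctil‖ ^ 2)
    - Real.log ((a * b - ‖c‖ ^ 2) / (a * b - ‖ctil‖ ^ 2))
    - 1 + ‖c - ctil‖ ^ 2 / (a * b - ‖ctil‖ ^ 2)

/-- Every point of the square QAM constellation has coordinates that are odd
multiples of `d/2`. -/
lemma qam_coords {K : ℕ} {d : ℝ} {c : ℂ} (h : c ∈ squareQAM K d) :
    ∃ p q : ℤ, Odd p ∧ Odd q ∧ c.re = p * d / 2 ∧ c.im = q * d / 2 := by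
  obtain ⟨m, n, hm1, hm2, hn1, hn2, e₁, e₂, he₁, he₂, hz⟩ := h
  have hre : c.re = e₁ * ((m:ℝ) - 1/2) * d := by
    rw [hz]; simp [Complex.add_re, Complex.mul_re, Complex.ofReal_re]
  have him : c.im = e₂ * ((n:ℝ) - 1/2) * d := by
    rw [hz]; simp [Complex.add_im, Complex.mul_im, Complex.ofReal_im]
  have hoddm : Odd (2*(m:ℤ) - 1) := ⟨m - 1, by ring⟩
  have hoddn : Odd (2*(n:ℤ) - 1) := ⟨n - 1, by ring⟩
  rcases he₁ with h1 | h1 <;> rcases he₂ with h2 | h2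
  · exact ⟨2*m - 1, 2*n - 1, hoddm, hoddn, by rw [hre, h1]; push_cast; ring,
      by rw [him, h2]; push_cast; ring⟩
  · exact ⟨2*m - 1, -(2*n - 1), hoddm, hoddn.neg, by rw [hre, h1]; push_cast; ring,
      by rw [him, h2]; push_cast; ring⟩
  · exact ⟨-(2*m - 1), 2*n - 1, hoddm.neg, hoddn, by rw [hre, h1]; push_cast; ring,
      by rw [him, h2]; push_cast; ring⟩
  · exact ⟨-(2*m - 1), -(2*n - 1), hoddm.neg, hoddn.neg, by rw [hre, h1]; push_cast; ring,
      by rw [him, h2]; push_cast; ring⟩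

lemma odd_sq_ge {p : ℤ} (hp : Odd p) : (1:ℝ) ≤ (p:ℝ)^2 := by
  have h0 : p ≠ 0 := by rintro rfl; simp at hp
  have h1 : (1:ℤ) ≤ p^2 := by nlinarith [Int.one_le_abs h0, _root_.sq_abs p]
  exact_mod_cast h1

/-- Every QAM point has squared modulus at least `d²/2`. -/
lemma qam_normsq {K : ℕ} {d : ℝ} {c : ℂ} (h : c ∈ squareQAM K d) :
    d^2 / 2 ≤ ‖c‖ ^ 2 := by
  obtain ⟨p, q, hp, hq, hre, him⟩ := qam_coords h
  have habs : ‖c‖ ^ 2 = c.re^2 + c.im^2 := by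
    rw [Complex.sq_norm, Complex.normSq_apply]; ring
  have hp2 := odd_sq_ge hp
  have hq2 := odd_sq_ge hq
  rw [habs, hre, him]
  nlinarith [sq_nonneg d]

/-- Distinct QAM points are at squared distance at least `d²`. -/
lemma qam_diff {K : ℕ} {d : ℝ} {c c' : ℂ}
    (h : c ∈ squareQAM K d) (h' : c' ∈ squareQAM K d) (hne : c ≠ c') :
    d^2 ≤ ‖c - c'‖ ^ 2 := by
  obtain ⟨p, q, hp, hq, hre, him⟩ := qam_coords h
  obtain ⟨p', q', hp', hq', hre', him'⟩ := qam_coords h'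
  have habs : ‖c - c'‖ ^ 2 = (c.re - c'.re)^2 + (c.im - c'.im)^2 := by
    rw [Complex.sq_norm, Complex.normSq_apply]; simp [Complex.sub_re, Complex.sub_im]; ring
  have key : (4:ℝ) ≤ ((p:ℝ) - p')^2 + ((q:ℝ) - q')^2 := by
    rcases hp with ⟨i, hi⟩; rcases hp' with ⟨i', hi'⟩
    rcases hq with ⟨j, hj⟩; rcases hq' with ⟨j', hj'⟩
    have hpq : p ≠ p' ∨ q ≠ q' := by
      by_contra hcon
      push_neg at hcon
      apply hne
      apply Complex.ext
      · rw [hre, hre', hcon.1]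
      · rw [him, him', hcon.2]
    rcases hpq with hne' | hne'
    · have hii : i ≠ i' := by rintro rfl; exact hne' (by omega)
      have h1 : (1:ℤ) ≤ (i - i')^2 := by
        nlinarith [Int.one_le_abs (sub_ne_zero.mpr hii), _root_.sq_abs (i - i')]
      have h1R : (1:ℝ) ≤ ((i:ℝ) - i')^2 := by exact_mod_cast h1
      have hpp : (p:ℝ) - p' = 2 * ((i:ℝ) - i') := by
        have : p - p' = 2 * (i - i') := by omega
        exact_mod_cast congrArg (Int.cast : ℤ → ℝ) this
      rw [hpp]
      nlinarith [sq_nonneg ((q:ℝ) - q')]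
    · have hjj : j ≠ j' := by rintro rfl; exact hne' (by omega)
      have h1 : (1:ℤ) ≤ (j - j')^2 := by
        nlinarith [Int.one_le_abs (sub_ne_zero.mpr hjj), _root_.sq_abs (j - j')]
      have h1R : (1:ℝ) ≤ ((j:ℝ) - j')^2 := by exact_mod_cast h1
      have hqq : (q:ℝ) - q' = 2 * ((j:ℝ) - j') := by
        have : q - q' = 2 * (j - j') := by omega
        exact_mod_cast congrArg (Int.cast : ℤ → ℝ) this
      rw [hqq]
      nlinarith [sq_nonneg ((p:ℝ) - p')]
  rw [habs, hre, him, hre', him']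
  have heq : (p * d / 2 - p' * d / 2)^2 + (q * d / 2 - q' * d / 2)^2
      = (((p:ℝ)-p')^2 + ((q:ℝ)-q')^2) * d^2 / 4 := by ring
  rw [heq]
  nlinarith [sq_nonneg d]

/-- Over distinct points of the square QAM constellation, the minimum KL distance
is `d²/(ab - d²/2)`, attained at `c = (1+j)d/2`, `c̃ = (1-j)d/2`. -/
theorem stmt8 (K : ℕ) (hK : 1 ≤ K) (d : ℝ) (hd : 0 < d) (a b : ℝ)
    (ha : 0 < a) (hb : 0 < b)
    (hab : ∀ c ∈ squareQAM K d, ‖c‖ ^ 2 < a * b) :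
    (∀ c ∈ squareQAM K d, ∀ ctil ∈ squareQAM K d, c ≠ ctil →
      d ^ 2 / (a * b - d ^ 2 / 2) ≤ klDist a b c ctil) ∧
    ((1 + Complex.I) * d / 2 ∈ squareQAM K d ∧
      (1 - Complex.I) * d / 2 ∈ squareQAM K d ∧
      (1 + Complex.I) * d / 2 ≠ (1 - Complex.I) * d / 2 ∧
      klDist a b ((1 + Complex.I) * d / 2) ((1 - Complex.I) * d / 2) =
        d ^ 2 / (a * b - d ^ 2 / 2)) := by
  have hpow : 1 ≤ 2 ^ (K - 1) := Nat.one_le_two_pow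
  have hmem1 : (1 + Complex.I) * d / 2 ∈ squareQAM K d := by
    refine ⟨1, 1, le_refl 1, hpow, le_refl 1, hpow, 1, 1, Or.inl rfl, Or.inl rfl, ?_⟩
    push_cast; ring
  have hmem2 : (1 - Complex.I) * d / 2 ∈ squareQAM K d := by
    refine ⟨1, 1, le_refl 1, hpow, le_refl 1, hpow, 1, -1, Or.inl rfl, Or.inr rfl, ?_⟩
    push_cast; ring
  -- positivity of `a*b - d²/2`
  have hd2 : d ^ 2 / 2 ≤ ‖(1 + Complex.I) * d / 2‖ ^ 2 := qam_normsq hmem1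
  have habd : 0 < a * b - d ^ 2 / 2 := by
    have := hab _ hmem1
    linarith
  constructor
  · intro c hc ctil hctil hne
    have hA : 0 < a * b - ‖c‖ ^ 2 := by linarith [hab c hc]
    have hB : 0 < a * b - ‖ctil‖ ^ 2 := by linarith [hab ctil hctil]
    have hBle : a * b - ‖ctil‖ ^ 2 ≤ a * b - d ^ 2 / 2 := by
      linarith [qam_normsq hctil]
    have hdiff : d ^ 2 ≤ ‖c - ctil‖ ^ 2 := qam_diff hc hctil hne
    have hx : 0 < (a * b - ‖c‖ ^ 2) / (a * b - ‖ctil‖ ^ 2) :=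
      div_pos hA hB
    have hlog := Real.log_le_sub_one_of_pos hx
    have h1 : d ^ 2 / (a * b - d ^ 2 / 2)
        ≤ ‖c - ctil‖ ^ 2 / (a * b - ‖ctil‖ ^ 2) :=
      div_le_div₀ (le_trans (sq_nonneg d) hdiff) hdiff hB hBle
    unfold klDist
    linarith
  refine ⟨hmem1, hmem2, ?_, ?_⟩
  · intro h
    have h2 : (Complex.I * d : ℂ) = 0 := by
      have h3 := sub_eq_zero.mpr h
      rw [show (1 + Complex.I) * (d:ℂ) / 2 - (1 - Complex.I) * d / 2
        = Complex.I * d by ring] at h3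
      exact h3
    rcases mul_eq_zero.mp h2 with h3 | h3
    · exact Complex.I_ne_zero h3
    · exact hd.ne' (by exact_mod_cast h3)
  · have habs1 : ‖(1 + Complex.I) * d / 2‖ ^ 2 = d ^ 2 / 2 := by
      rw [Complex.sq_norm]
      rw [show (1 + Complex.I) * (d:ℂ) / 2
        = Complex.ofReal (d/2) + Complex.ofReal (d/2) * Complex.I by push_cast; ring,
        Complex.normSq_add_mul_I]
      ring
    have habs2 : ‖(1 - Complex.I) * d / 2‖ ^ 2 = d ^ 2 / 2 := by
      rw [Complex.sq_norm]
      rw [show (1 - Complex.I) * (d:ℂ) / 2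
        = Complex.ofReal (d/2) + Complex.ofReal (-(d/2)) * Complex.I by push_cast; ring,
        Complex.normSq_add_mul_I]
      ring
    have habsd : ‖(1 + Complex.I) * d / 2 - (1 - Complex.I) * d / 2‖ ^ 2 = d ^ 2 := by
      rw [show (1 + Complex.I) * (d:ℂ) / 2 - (1 - Complex.I) * d / 2 = Complex.I * d by ring,
        Complex.sq_norm, Complex.normSq_mul, Complex.normSq_I, Complex.normSq_ofReal]
      ring
    unfold klDist
    rw [habs1, habs2, habsd, div_self habd.ne', Real.log_one]
    ring
end

section
/- Optimal solution of the joint problem: assume $P_1\beta_1 \leq \cdots \leq P_K\beta_K$ and $E_1 \leq \cdots \leq E_K$ with all quantities positive. Then the maximum over permutations $\pi$ of $\min_{k} P_k^2\beta_k^2 / E_{\pi(k)}$ is attained at the identity permutation, giving optimal minimum-distance squared $(d^\star)^2 = \min_k P_k^2 \beta_k^2 / E_k$. -/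
/-- Joint optimum: if `(P_k β_k)` and `(E_k)` are both nondecreasing and positive,
then over all permutations `π`, `min_k P_k² β_k² / E_{π(k)}` is maximized at the
identity; the optimal squared minimum distance is `(d⋆)² = min_k P_k² β_k² / E_k`. -/
theorem stmt17 (K : ℕ) (hK : 0 < K) (P β E : Fin K → ℝ)
    (hP : ∀ k, 0 < P k) (hβ : ∀ k, 0 < β k) (hE : ∀ k, 0 < E k)
    (hPβmono : Monotone fun k => P k * β k) (hEmono : Monotone E) :
    IsGreatest
      {x | ∃ π : Equiv.Perm (Fin K),
        x = Finset.univ.inf' (Finset.univ_nonempty_iff.mpr ⟨⟨0, hK⟩⟩)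
          fun k => (P k) ^ 2 * (β k) ^ 2 / E (π k)}
      (Finset.univ.inf' (Finset.univ_nonempty_iff.mpr ⟨⟨0, hK⟩⟩)
        fun k => (P k) ^ 2 * (β k) ^ 2 / E k) := by
  constructor
  · exact ⟨1, rfl⟩
  · rintro x ⟨π, rfl⟩
    apply Finset.le_inf'
    intro m _
    -- find j ≤ m with m ≤ π j
    have hex : ∃ j : Fin K, j ≤ m ∧ m ≤ π j := by
      by_contra h
      push_neg at h
      have hmaps : ∀ j ∈ Finset.Iic m, π j ∈ Finset.Iio m := by
        intro j hj
        simp only [Finset.mem_Iic] at hj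
        simpa using h j hj
      have hcard := Finset.card_le_card_of_injOn π hmaps
        (π.injective.injOn)
      rw [Fin.card_Iic, Fin.card_Iio] at hcard
      omega
    obtain ⟨j, hjm, hmpj⟩ := hex
    refine le_trans (Finset.inf'_le _ (Finset.mem_univ j)) ?_
    have ha : (P j) ^ 2 * (β j) ^ 2 ≤ (P m) ^ 2 * (β m) ^ 2 := by
      have h1 : P j * β j ≤ P m * β m := hPβmono hjm
      have h2 : 0 ≤ P j * β j := le_of_lt (mul_pos (hP j) (hβ j))
      nlinarith
    have hEle : E m ≤ E (π j) := hEmono hmpj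
    exact div_le_div₀ (by positivity) ha (hE m) hEle
end
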